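/- Define F(s₀) := 2·∫_{s₀}^{0} √(t − s₀) / (1 − t²)^{3/2} dt for s₀ ∈ (−1, 0). Then F(s₀) → 0 as s₀ → 0⁻, and F(s₀) → +∞ as s₀ → −1⁺. -/

import Mathlib

open Real Filter Set intervalIntegral

noncomputable def fI (s0 t : ℝ) : ℝ := Real.sqrt (t - s0) / (Real.sqrt (1 - t ^ 2)) ^ 3

lemma fI_contOn {a b : ℝ} (ha : -1 < a) (hb : b ≤ 0) (s0 : ℝ) :
    ContinuousOn (fI s0) (Set.Icc a b) := by
  apply ContinuousOn.div
  · exact (Real.continuous_sqrt.comp (continuous_id.sub continuous_const)).continuousOn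
  · exact ((Real.continuous_sqrt.comp (continuous_const.sub (continuous_pow 2))).pow 3).continuousOn
  · intro t ht
    have h1 : 0 < 1 - t ^ 2 := by nlinarith [ht.1, ht.2]
    exact pow_ne_zero 3 (ne_of_gt (Real.sqrt_pos.mpr h1))

lemma fI_int {a b : ℝ} (ha : -1 < a) (hb : b ≤ 0) (hab : a ≤ b) (s0 : ℝ) :
    IntervalIntegrable (fI s0) MeasureTheory.volume a b := by
  apply ContinuousOn.intervalIntegrable
  rw [Set.uIcc_of_le hab]
  exact fI_contOn ha hb s0

lemma fI_nonneg (s0 t : ℝ) : 0 ≤ fI s0 t :=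
  div_nonneg (Real.sqrt_nonneg _) (by positivity)

lemma key_ineq {s0 t : ℝ} (hs0 : s0 ∈ Set.Ioo (-1 : ℝ) (-3/4)) (ht : t ∈ Set.Icc (1 + 2*s0) 0) :
    1/(4*(1+t)) ≤ fI s0 t := by
  obtain ⟨ht1, ht2⟩ := ht
  have hu : 0 < 1 + t := by linarith [hs0.1]
  have h1 : (1+t)/2 ≤ t - s0 := by linarith
  have h2 : 1 - t^2 ≤ 2*(1+t) := by nlinarith
  have h1pos : 0 < 1 - t^2 := by nlinarith [hs0.1]
  have hnum : Real.sqrt ((1+t)/2) ≤ Real.sqrt (t - s0) := Real.sqrt_le_sqrt h1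
  have hden : (Real.sqrt (1 - t^2))^3 ≤ (Real.sqrt (2*(1+t)))^3 :=
    pow_le_pow_left₀ (Real.sqrt_nonneg _) (Real.sqrt_le_sqrt h2) 3
  have hdenpos : 0 < (Real.sqrt (1 - t^2))^3 := by positivity
  have hmain : Real.sqrt ((1+t)/2)/(Real.sqrt (2*(1+t)))^3
      ≤ Real.sqrt (t - s0)/(Real.sqrt (1 - t^2))^3 :=
    div_le_div₀ (Real.sqrt_nonneg _) hnum hdenpos hden
  have heq : Real.sqrt ((1+t)/2)/(Real.sqrt (2*(1+t)))^3 = 1/(4*(1+t)) := by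
    have hs : Real.sqrt (2*(1+t)) = Real.sqrt 2 * Real.sqrt (1+t) := Real.sqrt_mul (by norm_num) _
    have hs2 : Real.sqrt ((1+t)/2) = Real.sqrt (1+t) / Real.sqrt 2 := by
      rw [Real.sqrt_div hu.le]
    have hu2 : Real.sqrt (1+t) ^ 2 = 1+t := Real.sq_sqrt hu.le
    have h22 : Real.sqrt 2 ^ 2 = 2 := Real.sq_sqrt (by norm_num)
    have hupos : 0 < Real.sqrt (1+t) := Real.sqrt_pos.mpr hu
    have h2pos : 0 < Real.sqrt 2 := Real.sqrt_pos.mpr (by norm_num)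
    rw [hs, hs2]
    field_simp
    linear_combination (-(Real.sqrt (1+t)^2 * (Real.sqrt 2^2+2))) * h22
      + (-4) * hu2
  rw [← heq]
  exact hmain

lemma integ_lb {a : ℝ} (ha : -1 < a) (ha0 : a ≤ 0) :
    ∫ t in a..0, 1/(4*(1+t)) = (1/4) * Real.log (1/(a+1)) := by
  have h1 : (fun t : ℝ => 1/(4*(1+t))) = fun t : ℝ => (4:ℝ)⁻¹ * (t+1)⁻¹ := by
    funext t; rw [one_div, mul_inv, add_comm]
  rw [h1, intervalIntegral.integral_const_mul]
  have h2 : ∫ t in a..0, (t+1)⁻¹ = ∫ u in (a+1)..(0+1), u⁻¹ :=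
    intervalIntegral.integral_comp_add_right (fun u => u⁻¹) 1
  have h0 : (0:ℝ) ∉ Set.uIcc (a+1) (0+1) := by
    rw [Set.uIcc_of_le (by linarith)]
    intro h
    simp only [Set.mem_Icc] at h
    linarith [h.1]
  rw [h2, integral_inv h0]
  rw [show (0:ℝ)+1 = 1 by norm_num, one_div]
  norm_num

lemma part1 :
    Filter.Tendsto
      (fun s0 => 2 * ∫ t in s0..0, Real.sqrt (t - s0) / (Real.sqrt (1 - t ^ 2)) ^ 3)
      (nhdsWithin 0 (Set.Iio 0)) (nhds 0) := by
  apply squeeze_zero_norm' (a := fun s0 : ℝ => 2 * (Real.sqrt (-s0) / (Real.sqrt (3/4))^3 * |0 - s0|))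
  · filter_upwards [Ioo_mem_nhdsLT_of_mem (show (0:ℝ) ∈ Set.Ioc (-1/2) 0 by norm_num)] with s0 hs0
    have hb : ‖∫ t in s0..0, Real.sqrt (t - s0) / (Real.sqrt (1 - t ^ 2)) ^ 3‖
        ≤ Real.sqrt (-s0) / (Real.sqrt (3/4))^3 * |0 - s0| := by
      apply intervalIntegral.norm_integral_le_of_norm_le_const
      intro x hx
      rw [Set.uIoc_of_le hs0.2.le] at hx
      have hx1 : s0 < x := hx.1
      have hx2 : x ≤ 0 := hx.2
      have hxx : 3/4 ≤ 1 - x^2 := by nlinarith [hs0.1]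
      rw [Real.norm_eq_abs, abs_of_nonneg (div_nonneg (Real.sqrt_nonneg _) (by positivity))]
      apply div_le_div₀ (Real.sqrt_nonneg _) (Real.sqrt_le_sqrt (by linarith))
        (by positivity) (pow_le_pow_left₀ (Real.sqrt_nonneg _) (Real.sqrt_le_sqrt hxx) 3)
    calc ‖2 * ∫ t in s0..0, Real.sqrt (t - s0) / (Real.sqrt (1 - t ^ 2)) ^ 3‖
        = 2 * ‖∫ t in s0..0, Real.sqrt (t - s0) / (Real.sqrt (1 - t ^ 2)) ^ 3‖ := by
          rw [norm_mul]; norm_num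
      _ ≤ _ := by linarith
  · have hg : Continuous (fun s0 : ℝ => 2 * (Real.sqrt (-s0) / (Real.sqrt (3/4))^3 * |0 - s0|)) := by
      fun_prop
    have := (hg.tendsto 0).mono_left (nhdsWithin_le_nhds (s := Set.Iio (0:ℝ)))
    simpa using this

lemma part2 :
    Filter.Tendsto
      (fun s0 => 2 * ∫ t in s0..0, Real.sqrt (t - s0) / (Real.sqrt (1 - t ^ 2)) ^ 3)
      (nhdsWithin (-1) (Set.Ioi (-1))) Filter.atTop := by
  apply tendsto_atTop_mono' _
    (f₁ := fun s0 : ℝ => (1/2) * Real.log (1/(2*(1+s0))))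
  · filter_upwards [Ioo_mem_nhdsGT_of_mem (show (-1:ℝ) ∈ Set.Ico (-1) (-3/4) by norm_num)]
      with s0 hs0
    set a : ℝ := 1 + 2*s0 with ha_def
    have ha1 : -1 < a := by simp only [ha_def]; linarith [hs0.1]
    have ha2 : a ≤ 0 := by simp only [ha_def]; linarith [hs0.2]
    have hs0a : s0 ≤ a := by simp only [ha_def]; linarith [hs0.1]
    have hs0neg : -1 < s0 := hs0.1
    have hI1 : IntervalIntegrable (fI s0) MeasureTheory.volume s0 a := fI_int hs0neg ha2 hs0a s0
    have hI2 : IntervalIntegrable (fI s0) MeasureTheory.volume a 0 := fI_int ha1 le_rfl ha2 s0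
    have hIg : IntervalIntegrable (fun t : ℝ => 1/(4*(1+t))) MeasureTheory.volume a 0 := by
      apply ContinuousOn.intervalIntegrable
      rw [Set.uIcc_of_le ha2]
      apply ContinuousOn.div continuousOn_const (by fun_prop)
      intro t ht
      have : 0 < 1 + t := by linarith [ht.1]
      positivity
    have hsplit : (∫ t in s0..0, fI s0 t) = (∫ t in s0..a, fI s0 t) + ∫ t in a..0, fI s0 t :=
      (intervalIntegral.integral_add_adjacent_intervals hI1 hI2).symm
    have h1 : 0 ≤ ∫ t in s0..a, fI s0 t :=
      intervalIntegral.integral_nonneg hs0a (fun u _ => fI_nonneg s0 u)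
    have h2 : (∫ t in a..0, (1/(4*(1+t)))) ≤ ∫ t in a..0, fI s0 t := by
      apply intervalIntegral.integral_mono_on ha2 hIg hI2
      intro x hx
      exact key_ineq ⟨hs0.1, hs0.2⟩ hx
    have h3 : (∫ t in a..0, (1/(4*(1+t)))) = (1/4) * Real.log (1/(a+1)) := integ_lb ha1 ha2
    have haa : a + 1 = 2*(1+s0) := by simp only [ha_def]; ring
    have hle : (1/2) * Real.log (1/(2*(1+s0)))
        ≤ 2 * ((∫ t in s0..a, fI s0 t) + ∫ t in a..0, fI s0 t) := by
      rw [← haa]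
      nlinarith [h1, h2, h3]
    calc (1/2) * Real.log (1/(2*(1+s0)))
        ≤ 2 * ((∫ t in s0..a, fI s0 t) + ∫ t in a..0, fI s0 t) := hle
      _ = 2 * ∫ t in s0..0, Real.sqrt (t - s0) / (Real.sqrt (1 - t ^ 2)) ^ 3 := by
          rw [← hsplit]; rfl
  · have hlin : Tendsto (fun s0 : ℝ => 2*(1+s0)) (nhdsWithin (-1) (Set.Ioi (-1)))
        (nhdsWithin 0 (Set.Ioi 0)) := by
      apply tendsto_nhdsWithin_of_tendsto_nhds_of_eventually_within
      · have hc : Continuous fun s0 : ℝ => 2*(1+s0) := by fun_prop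
        have := (hc.tendsto (-1)).mono_left (nhdsWithin_le_nhds (s := Set.Ioi (-1:ℝ)))
        simpa using this
      · filter_upwards [self_mem_nhdsWithin] with x hx
        simp only [Set.mem_Ioi] at hx ⊢
        linarith
    have hlog : Tendsto (fun s0 : ℝ => Real.log (2*(1+s0))) (nhdsWithin (-1) (Set.Ioi (-1))) atBot :=
      Real.tendsto_log_nhdsGT_zero.comp hlin
    have hneg : Tendsto (fun s0 : ℝ => -Real.log (2*(1+s0)))
        (nhdsWithin (-1) (Set.Ioi (-1))) atTop :=
      tendsto_neg_atBot_atTop.comp hlog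
    have final := hneg.const_mul_atTop (show (0:ℝ) < 1/2 by norm_num)
    apply final.congr
    intro s0
    rw [one_div (2*(1+s0)), Real.log_inv]

/-- Limiting behavior of `F(s₀) = 2∫_{s₀}^{0} √(t−s₀)/(1−t²)^{3/2} dt`:
`F(s₀) → 0` as `s₀ → 0⁻` and `F(s₀) → +∞` as `s₀ → −1⁺`. -/
theorem stmt_15 :
    Filter.Tendsto
      (fun s0 => 2 * ∫ t in s0..0, Real.sqrt (t - s0) / (Real.sqrt (1 - t ^ 2)) ^ 3)
      (nhdsWithin 0 (Set.Iio 0)) (nhds 0) ∧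
    Filter.Tendsto
      (fun s0 => 2 * ∫ t in s0..0, Real.sqrt (t - s0) / (Real.sqrt (1 - t ^ 2)) ^ 3)
      (nhdsWithin (-1) (Set.Ioi (-1))) Filter.atTop := by
  exact ⟨part1, part2⟩
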